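/- The family S of all trees over {0,1} containing a Sacks (perfect) tree, regarded as a subset of the Polish space Tree_2, is Σ¹₁-complete: it is analytic, and for every Polish space Y and every analytic set B ⊆ Y there is a Borel measurable function f : Y → Tree_2 whose preimage of S equals B. -/

import Mathlib

open MeasureTheory

/-- The Polish space `Tree_2` of all trees over `{0,1}` (subsets of `2^{<ω}` closed
under initial segments), as a subspace of the Cantor space `2^{2^{<ω}} ≅ P(2^{<ω})`. -/
abbrev Tree2 : Type :=
  {x : List Bool → Bool // ∀ σ τ : List Bool, x σ = true → τ <+: σ → x τ = true}

/-- `S ⊆ 2^{<ω}` is a tree: closed under initial segments. -/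
def IsTreeSet2 (S : Set (List Bool)) : Prop :=
  ∀ σ ∈ S, ∀ τ : List Bool, τ <+: σ → τ ∈ S

/-- A Sacks (perfect) tree: a nonempty tree in which every node extends to a
splitting node. -/
def IsSacksTree (S : Set (List Bool)) : Prop :=
  IsTreeSet2 S ∧ S.Nonempty ∧
    ∀ σ ∈ S, ∃ τ ∈ S, σ <+: τ ∧ τ ++ [false] ∈ S ∧ τ ++ [true] ∈ S

/-- The family `S` of all trees over `{0,1}` containing a Sacks tree. -/
def sacksFam : Set Tree2 :=
  {T | ∃ S : Set (List Bool), IsSacksTree S ∧ S ⊆ {σ | T.1 σ = true}}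

section Aux

open Classical in
noncomputable def boolOf (P : Prop) : Bool := if P then true else false

@[simp] lemma boolOf_eq_true {P : Prop} : boolOf P = true ↔ P := by
  unfold boolOf; split <;> simp_all

lemma measurable_boolOf {α : Type*} [MeasurableSpace α] {P : α → Prop}
    (h : MeasurableSet {a | P a}) : Measurable fun a => boolOf (P a) := by
  apply measurable_to_countable'
  intro b
  cases b
  · have : (fun a => boolOf (P a)) ⁻¹' {false} = {a | P a}ᶜ := by
      ext a; simp [boolOf]
    rw [this]; exact h.compl
  · have : (fun a => boolOf (P a)) ⁻¹' {true} = {a | P a} := by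
      ext a; simp [boolOf]
    rw [this]; exact h

-- list lemmas
lemma prefix_getD {α : Type*} {l L : List α} (h : l <+: L) {i : ℕ} (hi : i < l.length) (d : α) :
    L.getD i d = l.getD i d := by
  obtain ⟨t, rfl⟩ := h
  rw [List.getD_eq_getElem _ _ hi,
    List.getD_eq_getElem _ _ (lt_of_lt_of_le hi (by simp))]
  exact List.getElem_append_left hi

lemma getD_snoc_length {α : Type*} (l : List α) (c d : α) :
    (l ++ [c]).getD l.length d = c := by
  rw [List.getD_eq_getElem _ _ (by simp)]
  exact List.getElem_concat_length (l := l) (a := c) (i := l.length) rfl (by simp)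

lemma snoc_prefix_of {α : Type*} {l L : List α} (h : l <+: L) (hl : l.length < L.length) (d : α) :
    l ++ [L.getD l.length d] <+: L := by
  obtain ⟨t, rfl⟩ := h
  cases t with
  | nil => simp at hl
  | cons a t' =>
    have h1 : l ++ a :: t' = (l ++ [a]) ++ t' := by simp
    have h2 : (l ++ a :: t').getD l.length d = a := by
      rw [h1, prefix_getD (List.prefix_append _ _) (by simp) d, getD_snoc_length]
    rw [h2, h1]
    exact List.prefix_append _ _

def finit {α : Type*} (u : ℕ → α) (n : ℕ) : List α := List.ofFn fun i : Fin n => u i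

@[simp] lemma finit_length {α : Type*} (u : ℕ → α) (n : ℕ) : (finit u n).length = n := by
  simp [finit]

@[simp] lemma finit_zero {α : Type*} (u : ℕ → α) : finit u 0 = [] := by simp [finit]

lemma finit_succ {α : Type*} (u : ℕ → α) (n : ℕ) :
    finit u (n + 1) = finit u n ++ [u n] := by
  rw [finit, List.ofFn_succ', List.concat_eq_append]
  rfl

lemma finit_getD {α : Type*} (u : ℕ → α) {n i : ℕ} (h : i < n) (d : α) :
    (finit u n).getD i d = u i := by
  rw [List.getD_eq_getElem _ _ (by simpa using h)]
  simp [finit]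

lemma finit_prefix {α : Type*} (u : ℕ → α) {m n : ℕ} (h : m ≤ n) :
    finit u m <+: finit u n := by
  induction n with
  | zero => simp_all
  | succ n ih =>
    rcases Nat.lt_or_ge m (n+1) with h' | h'
    · exact (ih (by omega)).trans (by rw [finit_succ]; exact List.prefix_append _ _)
    · have : m = n + 1 := by omega
      subst this; exact List.prefix_refl _

lemma finit_congr {α : Type*} {u v : ℕ → α} {n : ℕ} (h : ∀ i, i < n → u i = v i) :
    finit u n = finit v n := by
  apply List.ext_getElem (by simp)
  intro i h1 h2
  simpa [finit] using h i (by simpa [finit] using h1)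

end Aux

section Parser

def pstep : (List ℕ × Option ℕ) → Bool → (List ℕ × Option ℕ)
  | (s, none), _ => (s, some 0)
  | (s, some k), true => (s, some (k + 1))
  | (s, some k), false => (s ++ [k], none)

def parse (σ : List Bool) : List ℕ × Option ℕ := σ.foldl pstep ([], none)

@[simp] lemma parse_nil : parse [] = ([], none) := rfl

lemma parse_concat (σ : List Bool) (b : Bool) : parse (σ ++ [b]) = pstep (parse σ) b := by
  simp [parse, List.foldl_append]

lemma pstep_fst_prefix (p : List ℕ × Option ℕ) (b : Bool) : p.1 <+: (pstep p b).1 := by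
  rcases p with ⟨s, _ | k⟩ <;> cases b <;> simp [pstep]

lemma parse_fst_prefix (σ t : List Bool) : (parse σ).1 <+: (parse (σ ++ t)).1 := by
  induction t using List.reverseRecOn with
  | nil => simp
  | append_singleton t b ih =>
    rw [← List.append_assoc, parse_concat]
    exact ih.trans (pstep_fst_prefix _ _)

lemma parse_replicate_true {σ : List Bool} {s : List ℕ} {k : ℕ} (h : parse σ = (s, some k))
    (j : ℕ) : parse (σ ++ List.replicate j true) = (s, some (k + j)) := by
  induction j with
  | zero => simpa using h
  | succ j ih =>
    rw [List.replicate_succ', ← List.append_assoc, parse_concat, ih]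
    simp [pstep, Nat.add_assoc]

end Parser

section Reduction

variable {Y : Type*} [TopologicalSpace Y]

def cyl (s : List ℕ) : Set (ℕ → ℕ) := {x | ∀ i, i < s.length → s.getD i 0 = x i}

lemma cyl_anti {s t : List ℕ} (h : s <+: t) : cyl t ⊆ cyl s := by
  intro x hx i hi
  rw [← prefix_getD h hi 0]
  exact hx i (lt_of_lt_of_le hi h.length_le)

def Aset (f : (ℕ → ℕ) → Y) (s : List ℕ) : Set Y := closure (f '' cyl s)

lemma Aset_anti (f : (ℕ → ℕ) → Y) {s t : List ℕ} (h : s <+: t) : Aset f t ⊆ Aset f s :=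
  closure_mono (Set.image_mono (cyl_anti h))

def TbinP (f : (ℕ → ℕ) → Y) (y : Y) (σ : List Bool) : Prop :=
  ((parse σ).2 = none → y ∈ Aset f (parse σ).1) ∧
    ∀ k, (parse σ).2 = some k → ∃ m, k ≤ m ∧ y ∈ Aset f ((parse σ).1 ++ [m])

lemma TbinP_of_concat {f : (ℕ → ℕ) → Y} {y : Y} {σ : List Bool} {b : Bool}
    (h : TbinP f y (σ ++ [b])) : TbinP f y σ := by
  rcases hp : parse σ with ⟨s, o⟩
  rw [TbinP, parse_concat, hp] at h
  rw [TbinP, hp]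
  rcases o with _ | k
  · simp only [pstep] at h
    obtain ⟨m, _, hm⟩ := h.2 0 rfl
    exact ⟨fun _ => Aset_anti f (List.prefix_append _ _) hm, by simp⟩
  · cases b
    · simp only [pstep] at h
      refine ⟨by simp, fun k' hk' => ?_⟩
      cases hk'
      exact ⟨k, le_refl _, h.1 trivial⟩
    · simp only [pstep] at h
      refine ⟨by simp, fun k' hk' => ?_⟩
      cases hk'
      obtain ⟨m, hm1, hm2⟩ := h.2 (k + 1) rfl
      exact ⟨m, by omega, hm2⟩

lemma TbinP_of_prefix {f : (ℕ → ℕ) → Y} {y : Y} {σ τ : List Bool}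
    (h : TbinP f y σ) (hp : τ <+: σ) : TbinP f y τ := by
  obtain ⟨t, rfl⟩ := hp
  induction t using List.reverseRecOn with
  | nil => simpa using h
  | append_singleton t b ih =>
    rw [← List.append_assoc] at h
    exact ih (TbinP_of_concat h)

noncomputable def Fred (f : (ℕ → ℕ) → Y) (y : Y) : Tree2 :=
  ⟨fun σ => boolOf (TbinP f y σ), by
    intro σ τ h hp
    rw [boolOf_eq_true] at h ⊢
    exact TbinP_of_prefix h hp⟩

lemma measurable_Fred [MeasurableSpace Y] [OpensMeasurableSpace Y] (f : (ℕ → ℕ) → Y) :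
    Measurable (Fred f) := by
  apply Measurable.subtype_mk
  apply measurable_pi_lambda
  intro σ
  apply measurable_boolOf
  rcases hp : parse σ with ⟨s, o⟩
  rcases o with _ | k
  · have : {y | TbinP f y σ} = Aset f s := by
      ext y; simp [TbinP, hp, Aset]
    rw [this]
    exact isClosed_closure.measurableSet
  · have : {y | TbinP f y σ} = ⋃ m, {y | k ≤ m ∧ y ∈ Aset f (s ++ [m])} := by
      ext y
      simp only [Set.mem_setOf_eq, TbinP, hp, Set.mem_iUnion]
      constructor
      · intro h
        obtain ⟨m, hm1, hm2⟩ := h.2 k rfl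
        exact ⟨m, hm1, hm2⟩
      · rintro ⟨m, hm1, hm2⟩
        refine ⟨by simp, fun k' hk' => ?_⟩
        cases hk'
        exact ⟨m, hm1, hm2⟩
    rw [this]
    apply MeasurableSet.iUnion
    intro m
    by_cases hm : k ≤ m
    · simp only [hm, true_and]
      exact isClosed_closure.measurableSet
    · simp [hm]

end Reduction

section Forward

variable {Y : Type*} [TopologicalSpace Y]

/-- The nodes of the binary coding tree that follow the branch `x`. -/
def follows (x : ℕ → ℕ) (σ : List Bool) : Prop :=
  (∀ i, i < (parse σ).1.length → (parse σ).1.getD i 0 = x i) ∧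
    ∀ k, (parse σ).2 = some k → k ≤ x (parse σ).1.length

lemma init_snoc {x : ℕ → ℕ} {s : List ℕ} (h : ∀ i, i < s.length → s.getD i 0 = x i) :
    ∀ i, i < (s ++ [x s.length]).length → (s ++ [x s.length]).getD i 0 = x i := by
  intro i hi
  rcases Nat.lt_or_ge i s.length with h' | h'
  · rw [prefix_getD (List.prefix_append _ _) h' 0]
    exact h i h'
  · have : i = s.length := by simp at hi; omega
    subst this
    exact getD_snoc_length _ _ _

lemma follows_of_concat {x : ℕ → ℕ} {σ : List Bool} {b : Bool}
    (h : follows x (σ ++ [b])) : follows x σ := by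
  rcases hp : parse σ with ⟨s, o⟩
  rw [follows, parse_concat, hp] at h
  rw [follows, hp]
  dsimp only at h ⊢
  rcases o with _ | k
  · simp only [pstep] at h
    exact ⟨h.1, by simp⟩
  · cases b
    · simp only [pstep] at h
      refine ⟨fun i hi => (prefix_getD (List.prefix_append s [k]) hi 0).symm.trans
        (h.1 i (by simp; omega)), fun k' hk' => ?_⟩
      cases hk'
      have := h.1 s.length (by simp)
      rw [getD_snoc_length] at this
      omega
    · simp only [pstep] at h
      refine ⟨h.1, fun k' hk' => ?_⟩
      cases hk'
      have := h.2 (k + 1) rfl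
      omega

lemma follows_of_prefix {x : ℕ → ℕ} {σ τ : List Bool}
    (h : follows x σ) (hp : τ <+: σ) : follows x τ := by
  obtain ⟨t, rfl⟩ := hp
  induction t using List.reverseRecOn with
  | nil => simpa using h
  | append_singleton t b ih =>
    rw [← List.append_assoc] at h
    exact ih (follows_of_concat h)

lemma follows_snoc_of_none {x : ℕ → ℕ} {σ : List Bool} {s : List ℕ}
    (hp : parse σ = (s, none)) (h : follows x σ) (b : Bool) : follows x (σ ++ [b]) := by
  obtain ⟨h1, -⟩ := h
  rw [hp] at h1
  unfold follows
  rw [parse_concat, hp]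
  dsimp only [pstep]
  exact ⟨h1, fun k hk => by cases hk; exact Nat.zero_le _⟩

lemma isSacksTree_follows (x : ℕ → ℕ) : IsSacksTree {σ | follows x σ} := by
  refine ⟨fun σ hσ τ hτ => follows_of_prefix hσ hτ, ⟨[], by simp [follows]⟩, ?_⟩
  intro σ hσ
  rcases hp : parse σ with ⟨s, o⟩
  rcases o with _ | k
  · exact ⟨σ, hσ, List.prefix_refl _, follows_snoc_of_none hp hσ false,
      follows_snoc_of_none hp hσ true⟩
  · have hσ' : (∀ i, i < (parse σ).1.length → (parse σ).1.getD i 0 = x i) ∧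
        ∀ k', (parse σ).2 = some k' → k' ≤ x (parse σ).1.length := hσ
    rw [hp] at hσ'
    dsimp only at hσ'
    have hk : k ≤ x s.length := hσ'.2 k rfl
    set j := x s.length - k with hj
    have hparse1 : parse (σ ++ List.replicate j true) = (s, some (x s.length)) := by
      rw [parse_replicate_true hp j]
      congr 2
      omega
    have hparse2 : parse ((σ ++ List.replicate j true) ++ [false]) = (s ++ [x s.length], none) := by
      rw [parse_concat, hparse1]; rfl
    have hmemτ : follows x ((σ ++ List.replicate j true) ++ [false]) := by
      rw [follows, hparse2]
      exact ⟨init_snoc hσ'.1, by simp⟩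
    refine ⟨(σ ++ List.replicate j true) ++ [false], hmemτ, ?_, ?_, ?_⟩
    · rw [List.append_assoc]
      exact List.prefix_append _ _
    · exact follows_snoc_of_none hparse2 hmemτ false
    · exact follows_snoc_of_none hparse2 hmemτ true

lemma mem_cyl_of_init {x : ℕ → ℕ} {s : List ℕ} (h : ∀ i, i < s.length → s.getD i 0 = x i) :
    x ∈ cyl s := h

lemma fred_mem_sacksFam (f : (ℕ → ℕ) → Y) (x : ℕ → ℕ) : Fred f (f x) ∈ sacksFam := by
  refine ⟨{σ | follows x σ}, isSacksTree_follows x, ?_⟩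
  intro σ hσ
  show boolOf _ = true
  rw [boolOf_eq_true]
  have hσ' : (∀ i, i < (parse σ).1.length → (parse σ).1.getD i 0 = x i) ∧
      ∀ k, (parse σ).2 = some k → k ≤ x (parse σ).1.length := hσ
  clear hσ
  constructor
  · intro _
    exact subset_closure (Set.mem_image_of_mem f (mem_cyl_of_init hσ'.1))
  · intro k hk
    refine ⟨x (parse σ).1.length, hσ'.2 k hk, ?_⟩
    exact subset_closure (Set.mem_image_of_mem f (mem_cyl_of_init (init_snoc hσ'.1)))

end Forward

section Perfect

variable {S : Set (List Bool)}

lemma nil_mem_of_sacks (hS : IsSacksTree S) : [] ∈ S := by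
  obtain ⟨σ, hσ⟩ := hS.2.1
  exact hS.1 σ hσ [] List.nil_prefix

open Classical in
noncomputable def pick (S : Set (List Bool)) (hS : IsSacksTree S) (σ : List Bool) : List Bool :=
  if h : σ ∈ S then (hS.2.2 σ h).choose else σ

lemma pick_spec (hS : IsSacksTree S) {σ : List Bool} (hσ : σ ∈ S) :
    pick S hS σ ∈ S ∧ σ <+: pick S hS σ ∧
      pick S hS σ ++ [false] ∈ S ∧ pick S hS σ ++ [true] ∈ S := by
  unfold pick
  rw [dif_pos hσ]
  obtain ⟨h1, h2, h3, h4⟩ := (hS.2.2 σ hσ).choose_spec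
  exact ⟨h1, h2, h3, h4⟩

noncomputable def sfunAux (S : Set (List Bool)) (hS : IsSacksTree S) : List Bool → List Bool
  | [] => pick S hS []
  | b :: r => pick S hS (sfunAux S hS r ++ [b])

lemma sfunAux_mem (hS : IsSacksTree S) (r : List Bool) :
    sfunAux S hS r ∈ S ∧ ∀ b, sfunAux S hS r ++ [b] ∈ S := by
  induction r with
  | nil =>
    obtain ⟨h1, _, h3, h4⟩ := pick_spec hS (nil_mem_of_sacks hS)
    exact ⟨h1, fun b => by cases b <;> assumption⟩
  | cons b r ih =>
    obtain ⟨h1, _, h3, h4⟩ := pick_spec hS (ih.2 b)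
    exact ⟨h1, fun b' => by cases b' <;> assumption⟩

noncomputable def sfun (S : Set (List Bool)) (hS : IsSacksTree S) (c : List Bool) : List Bool :=
  sfunAux S hS c.reverse

lemma sfun_mem (hS : IsSacksTree S) (c : List Bool) : sfun S hS c ∈ S :=
  (sfunAux_mem hS c.reverse).1

lemma sfun_snoc_mem (hS : IsSacksTree S) (c : List Bool) (b : Bool) :
    sfun S hS c ++ [b] ∈ S :=
  (sfunAux_mem hS c.reverse).2 b

lemma sfun_snoc_prefix (hS : IsSacksTree S) (c : List Bool) (b : Bool) :
    sfun S hS c ++ [b] <+: sfun S hS (c ++ [b]) := by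
  have : sfun S hS (c ++ [b]) = pick S hS (sfun S hS c ++ [b]) := by
    simp [sfun, sfunAux, List.reverse_append]
  rw [this]
  exact (pick_spec hS (sfun_snoc_mem hS c b)).2.1

lemma sfun_mono (hS : IsSacksTree S) (c t : List Bool) :
    sfun S hS c <+: sfun S hS (c ++ t) := by
  induction t using List.reverseRecOn with
  | nil => simp
  | append_singleton t b ih =>
    rw [← List.append_assoc]
    exact ih.trans ((List.prefix_append _ [b]).trans (sfun_snoc_prefix hS (c ++ t) b))

lemma sfun_mono' (hS : IsSacksTree S) {c c' : List Bool} (h : c <+: c') :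
    sfun S hS c <+: sfun S hS c' := by
  obtain ⟨t, rfl⟩ := h
  exact sfun_mono hS c t

lemma sfun_length (hS : IsSacksTree S) (c : List Bool) : c.length ≤ (sfun S hS c).length := by
  induction c using List.reverseRecOn with
  | nil => simp
  | append_singleton c b ih =>
    have h1 := (sfun_snoc_prefix hS c b).length_le
    simp only [List.length_append, List.length_cons, List.length_nil] at h1 ⊢
    omega

noncomputable def zbr (S : Set (List Bool)) (hS : IsSacksTree S) (u : ℕ → Bool) (i : ℕ) : Bool :=
  (sfun S hS (finit u (i + 1))).getD i false

lemma zbr_init_prefix (hS : IsSacksTree S) (u : ℕ → Bool) (n : ℕ) :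
    finit (zbr S hS u) n <+: sfun S hS (finit u n) := by
  induction n with
  | zero => simp
  | succ n ih =>
    have h1 : finit (zbr S hS u) n <+: sfun S hS (finit u (n + 1)) :=
      ih.trans (sfun_mono' hS (finit_prefix u (Nat.le_succ n)))
    have h2 : n < (sfun S hS (finit u (n + 1))).length :=
      lt_of_lt_of_le (by omega) ((finit_length u (n+1)) ▸ sfun_length hS (finit u (n+1)))
    have h3 := snoc_prefix_of h1 (by rw [finit_length]; exact h2) false
    rw [finit_succ]
    convert h3 using 2
    rw [zbr, finit_length]

lemma zbr_init_mem (hS : IsSacksTree S) (u : ℕ → Bool) (n : ℕ) :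
    finit (zbr S hS u) n ∈ S :=
  hS.1 _ (sfun_mem hS (finit u n)) _ (zbr_init_prefix hS u n)

lemma zbr_apply (hS : IsSacksTree S) (u : ℕ → Bool) (n : ℕ) :
    zbr S hS u (sfun S hS (finit u n)).length = u n := by
  set c := finit u n with hc
  set m := (sfun S hS c).length with hm
  have hmn : n ≤ m := by rw [hm, ← finit_length u n]; exact sfun_length hS c
  have h1 : sfun S hS c ++ [u n] <+: sfun S hS (finit u (n + 1)) := by
    rw [finit_succ]
    exact sfun_snoc_prefix hS c (u n)
  have h2 : sfun S hS (finit u (n + 1)) <+: sfun S hS (finit u (m + 1)) :=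
    sfun_mono' hS (finit_prefix u (by omega))
  have h3 : sfun S hS c ++ [u n] <+: sfun S hS (finit u (m + 1)) := h1.trans h2
  rw [zbr, prefix_getD h3 (by simp [hm]) false, hm, getD_snoc_length]

lemma zbr_injective (hS : IsSacksTree S) : Function.Injective (zbr S hS) := by
  intro u v huv
  by_contra hne
  have hex : ∃ n, u n ≠ v n := by
    by_contra h
    push_neg at h
    exact hne (funext h)
  set n := Nat.find hex with hn
  have hun : u n ≠ v n := Nat.find_spec hex
  have hmin : ∀ i, i < n → u i = v i := fun i hi => by
    by_contra h
    exact Nat.find_min hex hi h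
  have hfin : finit u n = finit v n := finit_congr hmin
  have h1 := zbr_apply hS u n
  have h2 := zbr_apply hS v n
  rw [← hfin, ← huv] at h2
  exact hun (h1.symm.trans h2)

lemma countable_evOne : ({z : ℕ → Bool | ∃ p, ∀ q, p ≤ q → z q = true}).Countable := by
  have hsub : {z : ℕ → Bool | ∃ p, ∀ q, p ≤ q → z q = true} ⊆
      Set.range (fun l : List Bool => fun i => l.getD i true) := by
    rintro z ⟨p, hp⟩
    refine ⟨finit z p, funext fun i => ?_⟩
    show (finit z p).getD i true = z i
    rcases Nat.lt_or_ge i p with h | h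
    · exact finit_getD z h true
    · rw [List.getD_eq_default _ _ (by simpa using h)]
      exact (hp i h).symm
  exact (Set.countable_range _).mono hsub

lemma not_countable_funBool : ¬ Countable (ℕ → Bool) := by
  intro h
  obtain ⟨g, hg⟩ := (countable_iff_exists_injective (ℕ → Bool)).1 h
  set d : ℕ → Bool := fun n => !(Function.invFun g n n) with hd
  have hinv : Function.invFun g (g d) = d := Function.leftInverse_invFun hg d
  have h2 : d (g d) = !(Function.invFun g (g d) (g d)) := rfl
  rw [hinv] at h2
  cases hdd : d (g d) <;> rw [hdd] at h2 <;> simp at h2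

lemma exists_zbr_not_evOne (hS : IsSacksTree S) :
    ∃ u : ℕ → Bool, ∀ p, ∃ q, p ≤ q ∧ zbr S hS u q = false := by
  by_contra h
  push_neg at h
  have hall : ∀ u, zbr S hS u ∈ {z : ℕ → Bool | ∃ p, ∀ q, p ≤ q → z q = true} := by
    intro u
    obtain ⟨p, hp⟩ := h u
    exact ⟨p, fun q hq => by
      have := hp q hq
      cases hzq : zbr S hS u q
      · exact absurd hzq (this)
      · rfl⟩
  have : (Set.univ : Set (ℕ → Bool)).Countable := by
    have := countable_evOne.preimage (zbr_injective hS)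
    have heq : zbr S hS ⁻¹' {z : ℕ → Bool | ∃ p, ∀ q, p ≤ q → z q = true} = Set.univ :=
      Set.eq_univ_of_forall hall
    rwa [heq] at this
  exact not_countable_funBool (Set.countable_univ_iff.1 this)

end Perfect

section Backward

lemma eq_of_getD {α : Type*} {l1 l2 : List α} (d : α) (hlen : l1.length = l2.length)
    (h : ∀ i, i < l1.length → l1.getD i d = l2.getD i d) : l1 = l2 := by
  apply List.ext_getElem hlen
  intro i h1 h2
  rw [← List.getD_eq_getElem l1 d h1, ← List.getD_eq_getElem l2 d h2]
  exact h i h1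

lemma st_chain (z : ℕ → Bool) {N M : ℕ} (h : N ≤ M) :
    (parse (finit z N)).1 <+: (parse (finit z M)).1 := by
  obtain ⟨t, ht⟩ := finit_prefix z h
  rw [← ht]
  exact parse_fst_prefix _ _

lemma st_run (z : ℕ → Bool) {s : List ℕ} {k N : ℕ} (h : parse (finit z N) = (s, some k))
    (d : ℕ) (htrue : ∀ j, j < d → z (N + j) = true) :
    parse (finit z (N + d)) = (s, some (k + d)) := by
  induction d with
  | zero => simpa using h
  | succ d ih =>
    have : N + (d + 1) = (N + d) + 1 := rfl
    rw [this, finit_succ, parse_concat, ih (fun j hj => htrue j (by omega)),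
      htrue d (by omega)]
    simp [pstep, Nat.add_assoc]

lemma st_grow (z : ℕ → Bool) (hz : ∀ p, ∃ q, p ≤ q ∧ z q = false) (n : ℕ) :
    ∃ N, n ≤ (parse (finit z N)).1.length ∧ (parse (finit z N)).2 = none := by
  induction n with
  | zero => exact ⟨0, by simp⟩
  | succ n ih =>
    obtain ⟨N, hlen, hnone⟩ := ih
    rcases hp : parse (finit z N) with ⟨s, o⟩
    rw [hp] at hlen hnone
    dsimp only at hlen hnone
    subst hnone
    have hstep : parse (finit z (N + 1)) = (s, some 0) := by
      rw [finit_succ, parse_concat, hp]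
      cases hb : z N <;> simp [pstep]
    have h' : ∃ q, N + 1 ≤ q ∧ z q = false := hz (N + 1)
    set q := Nat.find h' with hq
    have hq1 : N + 1 ≤ q ∧ z q = false := Nat.find_spec h'
    have htrue : ∀ j, j < q - (N + 1) → z ((N + 1) + j) = true := by
      intro j hj
      have hmin := Nat.find_min h' (m := (N + 1) + j) (by omega)
      cases hb : z ((N + 1) + j)
      · exact absurd ⟨by omega, hb⟩ hmin
      · rfl
    have hrun := st_run z hstep (q - (N + 1)) htrue
    have hqeq : (N + 1) + (q - (N + 1)) = q := by omega
    rw [hqeq] at hrun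
    refine ⟨q + 1, ?_, ?_⟩
    · rw [finit_succ, parse_concat, hrun, hq1.2]
      simp [pstep]
      omega
    · rw [finit_succ, parse_concat, hrun, hq1.2]
      simp [pstep]

lemma mem_range_of_fred_mem {Y : Type*} [TopologicalSpace Y] [PolishSpace Y]
    {f : (ℕ → ℕ) → Y} (hf : Continuous f) {y : Y} (hy : Fred f y ∈ sacksFam) :
    y ∈ Set.range f := by
  obtain ⟨S, hS, hsub⟩ := hy
  have hT : ∀ σ ∈ S, TbinP f y σ := fun σ hσ => boolOf_eq_true.1 (hsub hσ)
  obtain ⟨u, hu⟩ := exists_zbr_not_evOne hS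
  set z := zbr S hS u with hzdef
  have hTz : ∀ n, TbinP f y (finit z n) := fun n => hT _ (zbr_init_mem hS u n)
  choose Nf hNlen hNnone using st_grow z hu
  set L : ℕ → List ℕ := fun n => (parse (finit z (Nf n))).1 with hL
  have hLdef : ∀ m, L m = (parse (finit z (Nf m))).1 := fun m => by rw [hL]
  have hNlen' : ∀ m, m ≤ (L m).length := fun m => by rw [hLdef]; exact hNlen m
  set x : ℕ → ℕ := fun i => (L (i + 1)).getD i 0 with hx
  have hagree : ∀ (a b i : ℕ), i < (L a).length → i < (L b).length →
      (L a).getD i 0 = (L b).getD i 0 := by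
    intro a b i ha hb
    simp only [hLdef] at ha hb ⊢
    rcases le_total (Nf a) (Nf b) with h | h
    · exact (prefix_getD (st_chain z h) ha 0).symm
    · exact prefix_getD (st_chain z h) hb 0
  have hxinit : ∀ n, finit x n <+: L n := by
    intro n
    have hlen : n ≤ (L n).length := hNlen' n
    have heq : finit x n = (L n).take n := by
      apply eq_of_getD 0 (by simp; omega)
      intro i hi
      have hin : i < n := by simpa using hi
      have htk : (L n).getD i 0 = ((L n).take n).getD i 0 :=
        prefix_getD (List.take_prefix n (L n)) (by simp; omega) 0
      rw [← htk, finit_getD x hin 0]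
      exact hagree (i + 1) n i (by have := hNlen' (i + 1); omega) (by omega)
    rw [heq]
    exact List.take_prefix _ _
  have hyA : ∀ n, y ∈ Aset f (finit x n) := fun n => by
    have h1 := (hTz (Nf n)).1 (hNnone n)
    rw [← hLdef] at h1
    exact Aset_anti f (hxinit n) h1
  letI := TopologicalSpace.upgradeIsCompletelyMetrizable Y
  have key : ∀ n : ℕ, ∃ w : ℕ → ℕ, w ∈ cyl (finit x n) ∧ dist y (f w) < 1 / (n + 1) := by
    intro n
    have hpos : (0 : ℝ) < 1 / (n + 1) := by positivity
    obtain ⟨b, hb1, hb2⟩ := Metric.mem_closure_iff.1 (hyA n) _ hpos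
    obtain ⟨w, hw, rfl⟩ := hb1
    exact ⟨w, hw, hb2⟩
  choose w hw1 hw2 using key
  have hwx : Filter.Tendsto w Filter.atTop (nhds x) := by
    rw [tendsto_pi_nhds]
    intro i
    apply Filter.Tendsto.congr' _ (tendsto_const_nhds (x := x i))
    rw [Filter.EventuallyEq, Filter.eventually_atTop]
    refine ⟨i + 1, fun n hn => ?_⟩
    have := hw1 n i (by simp; omega)
    rw [finit_getD x (by omega) 0] at this
    exact this
  have h1 : Filter.Tendsto (fun n => f (w n)) Filter.atTop (nhds (f x)) :=
    (hf.tendsto x).comp hwx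
  have h2 : Filter.Tendsto (fun n => f (w n)) Filter.atTop (nhds y) := by
    rw [tendsto_iff_dist_tendsto_zero]
    apply squeeze_zero (fun n => dist_nonneg) (fun n => le_of_lt (by rw [dist_comm]; exact hw2 n))
    exact tendsto_one_div_add_atTop_nhds_zero_nat
  exact ⟨x, tendsto_nhds_unique h1 h2⟩

end Backward

section Analytic

lemma tree2_closed :
    IsClosed {x : List Bool → Bool | ∀ σ τ : List Bool, x σ = true → τ <+: σ → x τ = true} := by
  have heq : {x : List Bool → Bool | ∀ σ τ : List Bool, x σ = true → τ <+: σ → x τ = true} =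
      ⋂ (σ : List Bool), ⋂ (τ : List Bool), {x | x σ = true → τ <+: σ → x τ = true} := by
    ext x; simp only [Set.mem_setOf_eq, Set.mem_iInter]
  rw [heq]
  refine isClosed_iInter fun σ => isClosed_iInter fun τ => ?_
  by_cases hp : τ <+: σ
  · have h2 : {x : List Bool → Bool | x σ = true → τ <+: σ → x τ = true} =
        ((fun x : List Bool → Bool => x σ) ⁻¹' {false}) ∪
          ((fun x : List Bool → Bool => x τ) ⁻¹' {true}) := by
      ext x
      by_cases h : x σ = true <;> simp [h, hp]
    rw [h2]
    exact (IsClosed.preimage (continuous_apply σ) (isClosed_discrete _)).union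
      (IsClosed.preimage (continuous_apply τ) (isClosed_discrete _))
  · have h2 : {x : List Bool → Bool | x σ = true → τ <+: σ → x τ = true} = Set.univ := by
      ext x; simp [hp]
    rw [h2]
    exact isClosed_univ

def sacksRel : Set (Tree2 × (List Bool → Bool)) :=
  {p | IsSacksTree {σ | p.2 σ = true} ∧ ∀ σ, p.2 σ = true → p.1.1 σ = true}

lemma msImplies {α : Type*} [MeasurableSpace α] {s t : Set α} (hs : MeasurableSet s)
    (ht : MeasurableSet t) : MeasurableSet {a | a ∈ s → a ∈ t} := by
  have : {a | a ∈ s → a ∈ t} = sᶜ ∪ t := by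
    ext a; by_cases h : a ∈ s <;> simp [h]
  rw [this]
  exact hs.compl.union ht

lemma measurableSet_sacksRel : MeasurableSet sacksRel := by
  have hev2 : ∀ σ : List Bool, MeasurableSet {p : Tree2 × (List Bool → Bool) | p.2 σ = true} := by
    intro σ
    have h : Measurable fun p : Tree2 × (List Bool → Bool) => p.2 σ :=
      (measurable_pi_apply σ).comp measurable_snd
    exact h (measurableSet_singleton true)
  have hev1 : ∀ σ : List Bool, MeasurableSet {p : Tree2 × (List Bool → Bool) | p.1.1 σ = true} := by
    intro σ
    have h : Measurable fun p : Tree2 × (List Bool → Bool) => p.1.1 σ :=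
      (measurable_pi_apply σ).comp (measurable_subtype_coe.comp measurable_fst)
    exact h (measurableSet_singleton true)
  have heq : sacksRel =
      ((⋂ σ, ⋂ τ, {p : Tree2 × (List Bool → Bool) | τ <+: σ ∧ p.2 σ = true → p.2 τ = true}) ∩
        (⋃ σ, {p : Tree2 × (List Bool → Bool) | p.2 σ = true})) ∩
      ((⋂ σ, ({p : Tree2 × (List Bool → Bool) | p.2 σ = true}ᶜ ∪
          ⋃ τ, {p : Tree2 × (List Bool → Bool) |
            p.2 τ = true ∧ σ <+: τ ∧ p.2 (τ ++ [false]) = true ∧ p.2 (τ ++ [true]) = true})) ∩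
        (⋂ σ, ({p : Tree2 × (List Bool → Bool) | p.2 σ = true}ᶜ ∪
          {p : Tree2 × (List Bool → Bool) | p.1.1 σ = true}))) := by
    ext p
    simp only [sacksRel, IsSacksTree, IsTreeSet2, Set.mem_setOf_eq, Set.mem_inter_iff,
      Set.mem_iInter, Set.mem_iUnion, Set.mem_union, Set.mem_compl_iff, Set.Nonempty]
    constructor
    · rintro ⟨⟨h1, ⟨σ0, h2⟩, h3⟩, h4⟩
      refine ⟨⟨fun σ τ => ?_, ⟨σ0, h2⟩⟩, fun σ => ?_, fun σ => ?_⟩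
      · rintro ⟨hpre, hσ⟩
        exact h1 σ hσ τ hpre
      · by_cases h : p.2 σ = true
        · obtain ⟨τ, hτ1, hτ2, hτ3, hτ4⟩ := h3 σ h
          exact Or.inr ⟨τ, hτ1, hτ2, hτ3, hτ4⟩
        · exact Or.inl h
      · by_cases h : p.2 σ = true
        · exact Or.inr (h4 σ h)
        · exact Or.inl h
    · rintro ⟨⟨h1, σ0, h2⟩, h3, h4⟩
      refine ⟨⟨fun σ hσ τ hpre => h1 σ τ ⟨hpre, hσ⟩, ⟨σ0, h2⟩, fun σ hσ => ?_⟩, fun σ hσ => ?_⟩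
      · rcases h3 σ with h | ⟨τ, hτ1, hτ2, hτ3, hτ4⟩
        · exact absurd hσ h
        · exact ⟨τ, hτ1, hτ2, hτ3, hτ4⟩
      · rcases h4 σ with h | h
        · exact absurd hσ h
        · exact h
  rw [heq]
  refine MeasurableSet.inter (MeasurableSet.inter ?_ ?_) (MeasurableSet.inter ?_ ?_)
  · refine MeasurableSet.iInter fun σ => MeasurableSet.iInter fun τ => ?_
    by_cases hpre : τ <+: σ
    · have h3 : {p : Tree2 × (List Bool → Bool) | τ <+: σ ∧ p.2 σ = true → p.2 τ = true} =
          {p : Tree2 × (List Bool → Bool) |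
            p ∈ {p : Tree2 × (List Bool → Bool) | p.2 σ = true} →
            p ∈ {p : Tree2 × (List Bool → Bool) | p.2 τ = true}} := by
        ext p; simp [hpre]
      rw [h3]
      exact msImplies (hev2 σ) (hev2 τ)
    · have h3 : {p : Tree2 × (List Bool → Bool) | τ <+: σ ∧ p.2 σ = true → p.2 τ = true} =
          Set.univ := by
        ext p; simp [hpre]
      rw [h3]
      exact MeasurableSet.univ
  · exact MeasurableSet.iUnion fun σ => hev2 σ
  · refine MeasurableSet.iInter fun σ => ((hev2 σ).compl.union ?_)
    refine MeasurableSet.iUnion fun τ => ?_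
    by_cases hpre : σ <+: τ
    · have h3 : {p : Tree2 × (List Bool → Bool) |
          p.2 τ = true ∧ σ <+: τ ∧ p.2 (τ ++ [false]) = true ∧ p.2 (τ ++ [true]) = true} =
          {p : Tree2 × (List Bool → Bool) | p.2 τ = true} ∩
            ({p : Tree2 × (List Bool → Bool) | p.2 (τ ++ [false]) = true} ∩
              {p : Tree2 × (List Bool → Bool) | p.2 (τ ++ [true]) = true}) := by
        ext p; simp [hpre, and_assoc]
      rw [h3]
      exact (hev2 τ).inter ((hev2 (τ ++ [false])).inter (hev2 (τ ++ [true])))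
    · have h3 : {p : Tree2 × (List Bool → Bool) |
          p.2 τ = true ∧ σ <+: τ ∧ p.2 (τ ++ [false]) = true ∧ p.2 (τ ++ [true]) = true} =
          (∅ : Set (Tree2 × (List Bool → Bool))) := by
        ext p; simp [hpre]
      rw [h3]
      exact MeasurableSet.empty
  · exact MeasurableSet.iInter fun σ => (hev2 σ).compl.union (hev1 σ)

lemma sacksFam_eq_image : sacksFam = Prod.fst '' sacksRel := by
  ext T
  constructor
  · rintro ⟨S, hS, hsub⟩
    refine ⟨(T, fun σ => boolOf (σ ∈ S)), ⟨?_, ?_⟩, rfl⟩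
    · have hset : {σ | boolOf (σ ∈ S) = true} = S := by ext σ; simp
      show IsSacksTree {σ | boolOf (σ ∈ S) = true}
      rw [hset]
      exact hS
    · intro σ hσ
      exact hsub (boolOf_eq_true.1 hσ)
  · rintro ⟨⟨T', χ⟩, ⟨h1, h2⟩, rfl⟩
    exact ⟨{σ | χ σ = true}, h1, fun σ hσ => h2 σ hσ⟩

set_option synthInstance.maxHeartbeats 1000000 in
set_option maxHeartbeats 1000000 in
lemma analyticSet_sacksFam : AnalyticSet sacksFam := by
  haveI hS0 : TopologicalSpace.SeparableSpace (List Bool → Bool) := inferInstance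
  haveI hC0 : TopologicalSpace.IsCompletelyMetrizableSpace (List Bool → Bool) := inferInstance
  haveI hP0 : PolishSpace (List Bool → Bool) := inferInstance
  haveI hPol : PolishSpace Tree2 := tree2_closed.polishSpace
  haveI hS1 : TopologicalSpace.SeparableSpace (Tree2 × (List Bool → Bool)) := inferInstance
  haveI hC1 : TopologicalSpace.IsCompletelyMetrizableSpace (Tree2 × (List Bool → Bool)) :=
    inferInstance
  haveI hP1 : PolishSpace (Tree2 × (List Bool → Bool)) := inferInstance
  haveI hB1 : BorelSpace Tree2 := Subtype.borelSpace _
  haveI hB : BorelSpace (Tree2 × (List Bool → Bool)) := Prod.borelSpace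
  rw [sacksFam_eq_image]
  exact measurableSet_sacksRel.analyticSet.image_of_continuous continuous_fst

def emptyTree : Tree2 := ⟨fun _ => false, fun σ τ h _ => by simp at h⟩

lemma emptyTree_not_mem : emptyTree ∉ sacksFam := by
  rintro ⟨S, hS, hsub⟩
  obtain ⟨σ, hσ⟩ := hS.2.1
  simpa [emptyTree] using hsub hσ

end Analytic

/-- The family of trees containing a Sacks tree is `Σ¹₁`-complete: it is analytic,
and every analytic subset of every Polish space Borel-reduces to it. -/
theorem sacksFam_analytic_complete :
    AnalyticSet sacksFam ∧
      ∀ (Y : Type) [TopologicalSpace Y] [PolishSpace Y]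
        [MeasurableSpace Y] [BorelSpace Y] (B : Set Y),
        AnalyticSet B →
          ∃ f : Y → Tree2, Measurable f ∧ f ⁻¹' sacksFam = B := by
  constructor
  · exact analyticSet_sacksFam
  · intro Y _ _ _ _ B hB
    rw [AnalyticSet] at hB
    rcases hB with rfl | ⟨f, hf, rfl⟩
    · refine ⟨fun _ => emptyTree, measurable_const, ?_⟩
      ext y
      simp only [Set.mem_preimage, Set.mem_empty_iff_false, iff_false]
      exact emptyTree_not_mem
    · refine ⟨Fred f, measurable_Fred f, ?_⟩
      ext y
      simp only [Set.mem_preimage, Set.mem_range]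
      constructor
      · exact fun h => mem_range_of_fred_mem hf h
      · rintro ⟨x, rfl⟩
        exact fred_mem_sacksFam f x
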